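/- Let A be an n×n complex matrix, B an n×m complex matrix, and D an m×m complex matrix such that J = fromBlocks A B Bᴴ D is Hermitian positive definite. Let μ ∈ ℝ satisfy Re(y* D y) ≥ μ·‖y‖² for all y ∈ ℂᵐ, and suppose μ > ‖B‖_F² · ‖A⁻¹‖_op, where ‖·‖_F is the Frobenius norm and ‖·‖_op the ℓ²→ℓ² operator norm. Then 0 ≤ Re Tr((J⁻¹)₁₁) − Re Tr(A⁻¹) ≤ ‖B‖_F² · Re Tr(A⁻²) / (μ − ‖B‖_F² · ‖A⁻¹‖_op), where (J⁻¹)₁₁ denotes the top-left n×n block of J⁻¹. -/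

import Mathlib

open Matrix
open scoped ComplexOrder

/-- The ℓ²→ℓ² operator norm of a square complex matrix. -/
noncomputable def l2OpNorm {n : ℕ} (M : Matrix (Fin n) (Fin n) ℂ) : ℝ :=
  ‖Matrix.toEuclideanCLM (𝕜 := ℂ) M‖

/-- Squared Frobenius norm of a rectangular complex matrix. -/
noncomputable def frobSq {n m : ℕ} (B : Matrix (Fin n) (Fin m) ℂ) : ℝ :=
  ∑ i, ∑ j, ‖B i j‖ ^ 2

lemma dot_eq_inner {m : ℕ} (x y : Fin m → ℂ) :
    star x ⬝ᵥ y = inner ℂ ((WithLp.equiv 2 (Fin m → ℂ)).symm x) ((WithLp.equiv 2 (Fin m → ℂ)).symm y) := by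
  simp [dotProduct, PiLp.inner_apply, RCLike.inner_apply, mul_comm]

lemma normsq_eq {m : ℕ} (x : Fin m → ℂ) :
    ‖(WithLp.equiv 2 (Fin m → ℂ)).symm x‖ ^ 2 = ∑ i, ‖x i‖ ^ 2 := by
  rw [EuclideanSpace.norm_eq, Real.sq_sqrt (by positivity)]; simp

/-- Cauchy-Schwarz for dot products. -/
lemma re_dot_le {m : ℕ} (x y : Fin m → ℂ) :
    (star x ⬝ᵥ y).re ≤ Real.sqrt (∑ i, ‖x i‖ ^ 2) * Real.sqrt (∑ i, ‖y i‖ ^ 2) := by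
  rw [dot_eq_inner]
  calc (inner ℂ ((WithLp.equiv 2 (Fin m → ℂ)).symm x) ((WithLp.equiv 2 (Fin m → ℂ)).symm y) : ℂ).re
      ≤ ‖(inner ℂ ((WithLp.equiv 2 (Fin m → ℂ)).symm x) ((WithLp.equiv 2 (Fin m → ℂ)).symm y) : ℂ)‖ :=
        Complex.re_le_norm _
    _ ≤ ‖(WithLp.equiv 2 (Fin m → ℂ)).symm x‖ * ‖(WithLp.equiv 2 (Fin m → ℂ)).symm y‖ :=
        norm_inner_le_norm _ _
    _ = _ := by
        rw [show ‖(WithLp.equiv 2 (Fin m → ℂ)).symm x‖ = Real.sqrt (∑ i, ‖x i‖ ^ 2) from ?_,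
          show ‖(WithLp.equiv 2 (Fin m → ℂ)).symm y‖ = Real.sqrt (∑ i, ‖y i‖ ^ 2) from ?_]
        · rw [← normsq_eq y]; exact (Real.sqrt_sq (norm_nonneg _)).symm
        · rw [← normsq_eq x]; exact (Real.sqrt_sq (norm_nonneg _)).symm

/-- Quadratic form bounded by the operator norm. -/
lemma re_quad_le_opNorm {m : ℕ} (M : Matrix (Fin m) (Fin m) ℂ) (x : Fin m → ℂ) :
    (star x ⬝ᵥ M.mulVec x).re ≤ l2OpNorm M * ∑ i, ‖x i‖ ^ 2 := by
  set x' := (WithLp.equiv 2 (Fin m → ℂ)).symm x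
  rw [dot_eq_inner]
  rw [show (WithLp.equiv 2 (Fin m → ℂ)).symm (M.mulVec x) = Matrix.toEuclideanCLM (𝕜 := ℂ) M x' from by
    rfl]
  calc (inner ℂ x' (Matrix.toEuclideanCLM (𝕜 := ℂ) M x') : ℂ).re
      ≤ ‖(inner ℂ x' (Matrix.toEuclideanCLM (𝕜 := ℂ) M x') : ℂ)‖ := Complex.re_le_norm _
    _ ≤ ‖x'‖ * ‖Matrix.toEuclideanCLM (𝕜 := ℂ) M x'‖ := norm_inner_le_norm _ _
    _ ≤ ‖x'‖ * (l2OpNorm M * ‖x'‖) := by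
        exact mul_le_mul_of_nonneg_left ((Matrix.toEuclideanCLM (𝕜 := ℂ) M).le_opNorm x') (norm_nonneg _)
    _ = l2OpNorm M * ‖x'‖ ^ 2 := by ring
    _ = _ := by rw [normsq_eq]

/-- Frobenius bound on `mulVec`. -/
lemma sum_normsq_mulVec_le {n m : ℕ} (B : Matrix (Fin n) (Fin m) ℂ) (y : Fin m → ℂ) :
    ∑ i, ‖B.mulVec y i‖ ^ 2 ≤ frobSq B * ∑ j, ‖y j‖ ^ 2 := by
  have h : ∀ i, ‖B.mulVec y i‖ ^ 2 ≤ (∑ j, ‖B i j‖ ^ 2) * ∑ j, ‖y j‖ ^ 2 := by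
    intro i
    have : B.mulVec y i = star (fun j => (starRingEnd ℂ) (B i j)) ⬝ᵥ y := by
      simp [Matrix.mulVec, dotProduct]
    rw [this, dot_eq_inner]
    calc ‖(inner ℂ ((WithLp.equiv 2 (Fin m → ℂ)).symm fun j => (starRingEnd ℂ) (B i j))
            ((WithLp.equiv 2 (Fin m → ℂ)).symm y) : ℂ)‖ ^ 2
        ≤ (‖(WithLp.equiv 2 (Fin m → ℂ)).symm fun j => (starRingEnd ℂ) (B i j)‖
            * ‖(WithLp.equiv 2 (Fin m → ℂ)).symm y‖) ^ 2 := by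
          apply pow_le_pow_left₀ (norm_nonneg _) (norm_inner_le_norm _ _)
      _ = _ := by
          rw [mul_pow, normsq_eq, normsq_eq]
          simp
  calc ∑ i, ‖B.mulVec y i‖ ^ 2 ≤ ∑ i, (∑ j, ‖B i j‖ ^ 2) * ∑ j, ‖y j‖ ^ 2 :=
        Finset.sum_le_sum fun i _ => h i
    _ = frobSq B * ∑ j, ‖y j‖ ^ 2 := by rw [frobSq, Finset.sum_mul]

set_option maxHeartbeats 1000000 in
/-- Bound on the quadratic form of the inverse of a coercive matrix. -/
lemma quad_inv_bound {m : ℕ} (S : Matrix (Fin m) (Fin m) ℂ) (c : ℝ) (hc : 0 < c)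
    (hS : ∀ y, c * ∑ i, ‖y i‖ ^ 2 ≤ (star y ⬝ᵥ S.mulVec y).re) (hU : IsUnit S.det)
    (v : Fin m → ℂ) :
    0 ≤ (star v ⬝ᵥ S⁻¹.mulVec v).re ∧
      (star v ⬝ᵥ S⁻¹.mulVec v).re ≤ (∑ i, ‖v i‖ ^ 2) / c := by
  set y := S⁻¹.mulVec v with hy
  have hv : S.mulVec y = v := by
    rw [hy, Matrix.mulVec_mulVec, Matrix.mul_nonsing_inv _ hU, Matrix.one_mulVec]
  have hre : (star v ⬝ᵥ y).re = (star y ⬝ᵥ v).re := by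
    rw [Matrix.star_dotProduct]
    exact (Complex.conj_re _)
  have h1 : c * ∑ i, ‖y i‖ ^ 2 ≤ (star v ⬝ᵥ y).re := by
    rw [hre]; rw [← hv]; exact hS y
  have hsy : (0:ℝ) ≤ ∑ i, ‖y i‖ ^ 2 := by positivity
  have hsv : (0:ℝ) ≤ ∑ i, ‖v i‖ ^ 2 := by positivity
  refine ⟨le_trans (by positivity) h1, ?_⟩
  have h2 : (star v ⬝ᵥ y).re ≤ Real.sqrt (∑ i, ‖v i‖ ^ 2) * Real.sqrt (∑ i, ‖y i‖ ^ 2) :=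
    re_dot_le v y
  have hss : Real.sqrt (∑ i, ‖v i‖ ^ 2) * Real.sqrt (∑ i, ‖v i‖ ^ 2) = ∑ i, ‖v i‖ ^ 2 :=
    Real.mul_self_sqrt hsv
  have hsq : Real.sqrt (∑ i, ‖y i‖ ^ 2) * c ≤ Real.sqrt (∑ i, ‖v i‖ ^ 2) := by
    rcases eq_or_lt_of_le (Real.sqrt_nonneg (∑ i, ‖y i‖ ^ 2)) with h0 | h0
    · rw [← h0, zero_mul]; positivity
    · have hyy : ∑ i, ‖y i‖ ^ 2 = (Real.sqrt (∑ i, ‖y i‖ ^ 2)) ^ 2 := (Real.sq_sqrt hsy).symm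
      rw [hyy] at h1
      have h3 := le_trans h1 h2
      nlinarith [h3, h0]
  rw [le_div_iff₀ hc]
  nlinarith [mul_le_mul_of_nonneg_left hsq (Real.sqrt_nonneg (∑ i, ‖v i‖ ^ 2)),
    mul_le_mul_of_nonneg_right h2 hc.le, hss]

/-- The top-left block of a positive definite block matrix is positive definite. -/
lemma posDef_block₁₁ {n m : ℕ} {A : Matrix (Fin n) (Fin n) ℂ} {B : Matrix (Fin n) (Fin m) ℂ}
    {D : Matrix (Fin m) (Fin m) ℂ} (hJ : (fromBlocks A B Bᴴ D).PosDef) : A.PosDef := by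
  rw [posDef_iff_dotProduct_mulVec] at hJ ⊢
  constructor
  · have h := hJ.1
    unfold Matrix.IsHermitian at h ⊢
    rw [fromBlocks_conjTranspose] at h
    have := congrArg Matrix.toBlocks₁₁ h
    simpa [Matrix.toBlocks_fromBlocks₁₁] using this
  · intro x hx
    have hz : (Sum.elim x (0 : Fin m → ℂ)) ≠ 0 := by
      intro h
      apply hx
      funext i
      exact congrFun h (Sum.inl i)
    have := hJ.2 hz
    rw [fromBlocks_mulVec] at this
    have hstar : star (Sum.elim x (0 : Fin m → ℂ)) = Sum.elim (star x) (0 : Fin m → ℂ) := by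
      funext i; cases i <;> simp
    rw [hstar, sumElim_dotProduct_sumElim] at this
    simpa using this

/-- Absolute-error bound for the Schur-complement CRB approximation: if
`J = fromBlocks A B Bᴴ D` is Hermitian positive definite, `Re(y* D y) ≥ μ ‖y‖²` for all
`y`, and `μ > ‖B‖_F² ‖A⁻¹‖_op`, then the gap `Re Tr((J⁻¹)₁₁) − Re Tr(A⁻¹)` lies in
`[0, ‖B‖_F² · Re Tr(A⁻²) / (μ − ‖B‖_F² ‖A⁻¹‖_op)]`. -/
theorem crb_gap_absolute_error_bound
    (n m : ℕ)
    (A : Matrix (Fin n) (Fin n) ℂ) (B : Matrix (Fin n) (Fin m) ℂ)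
    (D : Matrix (Fin m) (Fin m) ℂ)
    (hJ : (fromBlocks A B Bᴴ D).PosDef)
    (μ : ℝ)
    (hμ : ∀ y : Fin m → ℂ, (star y ⬝ᵥ D.mulVec y).re ≥ μ * ∑ i, ‖y i‖ ^ 2)
    (hgap : frobSq B * l2OpNorm A⁻¹ < μ) :
    0 ≤ (((fromBlocks A B Bᴴ D)⁻¹.toBlocks₁₁).trace).re - ((A⁻¹).trace).re ∧
      (((fromBlocks A B Bᴴ D)⁻¹.toBlocks₁₁).trace).re - ((A⁻¹).trace).re ≤
        frobSq B * ((A⁻¹ * A⁻¹).trace).re / (μ - frobSq B * l2OpNorm A⁻¹) := by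
  have hc : (0:ℝ) < μ - frobSq B * l2OpNorm A⁻¹ := sub_pos.mpr hgap
  set c : ℝ := μ - frobSq B * l2OpNorm A⁻¹ with hc_def
  have hA : A.PosDef := posDef_block₁₁ hJ
  have hAHinv : (A⁻¹).IsHermitian := hA.1.inv
  letI iA : Invertible A := hA.isUnit.invertible
  letI iJ : Invertible (fromBlocks A B Bᴴ D) := hJ.isUnit.invertible
  letI iS : Invertible (D - Bᴴ * ⅟A * B) := invertibleOfFromBlocks₁₁Invertible A B Bᴴ D
  have hAinv : ⅟A = A⁻¹ := invOf_eq_nonsing_inv A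
  letI iS' : Invertible (D - Bᴴ * A⁻¹ * B) := hAinv ▸ iS
  set Sc := D - Bᴴ * A⁻¹ * B with hSc
  -- block formula for the inverse
  have hblock : (fromBlocks A B Bᴴ D)⁻¹.toBlocks₁₁ = A⁻¹ + A⁻¹ * B * Sc⁻¹ * Bᴴ * A⁻¹ := by
    rw [← invOf_eq_nonsing_inv, invOf_fromBlocks₁₁_eq, toBlocks_fromBlocks₁₁]
    simp only [invOf_eq_nonsing_inv, hSc]
  -- Schur complement lower bound
  have hSlow : ∀ y : Fin m → ℂ, c * ∑ i, ‖y i‖ ^ 2 ≤ (star y ⬝ᵥ Sc.mulVec y).re := by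
    intro y
    have hmv : Sc.mulVec y = D.mulVec y - Bᴴ.mulVec ((A⁻¹).mulVec (B.mulVec y)) := by
      rw [hSc, Matrix.sub_mulVec, Matrix.mulVec_mulVec, Matrix.mulVec_mulVec]
    have hquad : star y ⬝ᵥ Bᴴ.mulVec ((A⁻¹).mulVec (B.mulVec y)) =
        star (B.mulVec y) ⬝ᵥ (A⁻¹).mulVec (B.mulVec y) := by
      rw [Matrix.dotProduct_mulVec, ← Matrix.star_mulVec]
    have hub : (star (B.mulVec y) ⬝ᵥ (A⁻¹).mulVec (B.mulVec y)).re ≤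
        l2OpNorm A⁻¹ * (frobSq B * ∑ i, ‖y i‖ ^ 2) := by
      calc (star (B.mulVec y) ⬝ᵥ (A⁻¹).mulVec (B.mulVec y)).re
          ≤ l2OpNorm A⁻¹ * ∑ i, ‖B.mulVec y i‖ ^ 2 := re_quad_le_opNorm _ _
        _ ≤ l2OpNorm A⁻¹ * (frobSq B * ∑ i, ‖y i‖ ^ 2) := by
            apply mul_le_mul_of_nonneg_left (sum_normsq_mulVec_le B y) (norm_nonneg _)
    have hμy := hμ y
    rw [hmv, dotProduct_sub, Complex.sub_re, hquad]
    have hsy : (0:ℝ) ≤ ∑ i, ‖y i‖ ^ 2 := by positivity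
    have : c * ∑ i, ‖y i‖ ^ 2 = μ * ∑ i, ‖y i‖ ^ 2 -
        l2OpNorm A⁻¹ * (frobSq B * ∑ i, ‖y i‖ ^ 2) := by rw [hc_def]; ring
    rw [this]
    exact sub_le_sub hμy hub
  have hU : IsUnit Sc.det := isUnit_det_of_invertible Sc
  -- rewrite the gap as the trace of X Sc⁻¹ Xᴴ
  set X := A⁻¹ * B with hX
  have hG : A⁻¹ * B * Sc⁻¹ * Bᴴ * A⁻¹ = X * Sc⁻¹ * Xᴴ := by
    rw [hX, conjTranspose_mul, hAHinv.eq]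
    simp only [Matrix.mul_assoc]
  -- diagonal entries as quadratic forms
  have hdiag : ∀ i, (X * Sc⁻¹ * Xᴴ) i i =
      star (fun j => star (X i j)) ⬝ᵥ Sc⁻¹.mulVec (fun j => star (X i j)) := by
    intro i
    simp only [Matrix.mul_apply, Matrix.conjTranspose_apply, dotProduct, Matrix.mulVec,
      Finset.sum_mul, Finset.mul_sum, Pi.star_apply, star_star]
    rw [Finset.sum_comm]
    congr 1; funext j; congr 1; funext k; ring
  -- the gap equals the sum of the real parts of the quadratic forms
  have hgap_eq : (((fromBlocks A B Bᴴ D)⁻¹.toBlocks₁₁).trace).re - ((A⁻¹).trace).re =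
      ∑ i, ((star (fun j => star (X i j)) ⬝ᵥ Sc⁻¹.mulVec (fun j => star (X i j))).re) := by
    rw [hblock, Matrix.trace_add, Complex.add_re, add_sub_cancel_left, hG, Matrix.trace,
      Complex.re_sum]
    exact Finset.sum_congr rfl fun i _ => by rw [Matrix.diag_apply, hdiag i]
  rw [hgap_eq]
  have hbounds := fun (v : Fin m → ℂ) => quad_inv_bound Sc c hc hSlow hU v
  constructor
  · exact Finset.sum_nonneg fun i _ => (hbounds _).1
  · -- upper bound
    have hXfrob : frobSq X ≤ frobSq B * ((A⁻¹ * A⁻¹).trace).re := by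
      have htr : ((A⁻¹ * A⁻¹).trace).re = frobSq A⁻¹ := by
        rw [Matrix.trace, Complex.re_sum, frobSq]
        refine Finset.sum_congr rfl fun i _ => ?_
        rw [Matrix.diag_apply, Matrix.mul_apply, Complex.re_sum]
        refine Finset.sum_congr rfl fun j _ => ?_
        rw [← hAHinv.apply j i]
        simp [Complex.mul_conj, Complex.normSq_eq_norm_sq]
        norm_cast
      have hcol : ∀ j, ∑ i, ‖X i j‖ ^ 2 ≤ frobSq A⁻¹ * ∑ k, ‖B k j‖ ^ 2 := by
        intro j
        have hXc : ∀ i, X i j = (A⁻¹.mulVec (fun k => B k j)) i := by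
          intro i
          simp [hX, Matrix.mul_apply, Matrix.mulVec, dotProduct]
        calc ∑ i, ‖X i j‖ ^ 2 = ∑ i, ‖(A⁻¹.mulVec (fun k => B k j)) i‖ ^ 2 := by
              exact Finset.sum_congr rfl fun i _ => by rw [hXc i]
          _ ≤ frobSq A⁻¹ * ∑ k, ‖B k j‖ ^ 2 := sum_normsq_mulVec_le _ _
      calc frobSq X = ∑ j, ∑ i, ‖X i j‖ ^ 2 := Finset.sum_comm
        _ ≤ ∑ j, frobSq A⁻¹ * ∑ k, ‖B k j‖ ^ 2 := Finset.sum_le_sum fun j _ => hcol j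
        _ = frobSq A⁻¹ * ∑ j, ∑ k, ‖B k j‖ ^ 2 := by rw [Finset.mul_sum]
        _ = frobSq A⁻¹ * frobSq B := by
              congr 1
              rw [frobSq]
              exact Finset.sum_comm
        _ = frobSq B * ((A⁻¹ * A⁻¹).trace).re := by rw [htr, mul_comm]
    have hsum : ∑ i, ((star (fun j => star (X i j)) ⬝ᵥ Sc⁻¹.mulVec (fun j => star (X i j))).re)
        ≤ frobSq X / c := by
      calc ∑ i, ((star (fun j => star (X i j)) ⬝ᵥ Sc⁻¹.mulVec (fun j => star (X i j))).re)
          ≤ ∑ i, (∑ j, ‖star (X i j)‖ ^ 2) / c := Finset.sum_le_sum fun i _ => (hbounds _).2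
        _ = frobSq X / c := by
            rw [frobSq, Finset.sum_div]
            exact Finset.sum_congr rfl fun i _ => by simp
    refine hsum.trans ?_
    gcongr
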